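/- Fix a natural number k and real z ∈ [0,1]. As n → ∞ with j = ⌊z·n⌋, the normalized probability mass p_k(j; n) = C(n−j, k)/C(n, k+1), rescaled by n, converges to the density ρ_k(z) = (1+k)(1−z)^k; that is, n·C(n−⌊zn⌋, k)/C(n, k+1) → (1+k)(1−z)^k. -/

import Mathlib

open Filter Finset Nat

lemma floor_div_tendsto (z : ℝ) (hz0 : 0 ≤ z) :
    Tendsto (fun n : ℕ => (⌊z * n⌋₊ : ℝ) / n) atTop (nhds z) := by
  have h1 : Tendsto (fun n : ℕ => z - 1 / (n : ℝ)) atTop (nhds z) := by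
    simpa using tendsto_const_nhds.sub (tendsto_one_div_atTop_nhds_zero_nat : Tendsto (fun n : ℕ => 1 / (n:ℝ)) atTop (nhds 0))
  refine tendsto_of_tendsto_of_tendsto_of_le_of_le' h1 tendsto_const_nhds ?_ ?_
  · filter_upwards [eventually_ge_atTop 1] with n hn
    have hnpos : (0:ℝ) < n := by exact_mod_cast hn
    have := Nat.sub_one_lt_floor (z * n)
    rw [le_div_iff₀ hnpos]
    have hne : (n:ℝ) ≠ 0 := ne_of_gt hnpos
    have h2 : (1/(n:ℝ)) * n = 1 := by field_simp
    nlinarith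
  · filter_upwards [eventually_ge_atTop 1] with n hn
    have hnpos : (0:ℝ) < n := by exact_mod_cast hn
    exact (div_le_iff₀ hnpos).mpr (by nlinarith [Nat.floor_le (by positivity : (0:ℝ) ≤ z * n)])

lemma cast_descFactorial_prod {m k : ℕ} (h : k ≤ m) :
    (Nat.descFactorial m k : ℝ) = ∏ i ∈ range k, ((m:ℝ) - i) := by
  rw [Nat.descFactorial_eq_prod_range, Nat.cast_prod]
  refine Finset.prod_congr rfl fun i hi => ?_
  rw [Nat.cast_sub (le_of_lt (lt_of_lt_of_le (mem_range.mp hi) h))]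

theorem choose_ratio_tendsto_density (k : ℕ) (z : ℝ) (hz0 : 0 ≤ z) (hz1 : z ≤ 1) :
    Filter.Tendsto
      (fun n : ℕ => (n : ℝ) * (Nat.choose (n - ⌊z * n⌋₊) k : ℝ) / (Nat.choose n (k + 1) : ℝ))
      Filter.atTop (nhds ((1 + k : ℝ) * (1 - z) ^ k)) := by
  rcases eq_or_lt_of_le hz1 with hz | hz
  · -- z = 1
    subst hz
    apply Tendsto.congr' _ (tendsto_const_nhds)
    filter_upwards [eventually_ge_atTop 1] with n hn
    have hfl : ⌊(1:ℝ) * n⌋₊ = n := by simp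
    rw [hfl, Nat.sub_self]
    rcases Nat.eq_zero_or_pos k with hk | hk
    · subst hk
      have : (Nat.choose n 1 : ℝ) = n := by simp
      simp only [Nat.choose_zero_right, Nat.cast_one, mul_one, this]
      rw [div_self (by exact_mod_cast Nat.one_le_iff_ne_zero.mp hn)]
      norm_num
    · rw [Nat.choose_eq_zero_of_lt hk]
      simp [sub_self, zero_pow (Nat.pos_iff_ne_zero.mp hk)]
  · -- z < 1
    have h1z : 0 < 1 - z := by linarith
    set g : ℕ → ℝ := fun n =>
      (1 + k : ℝ) * ∏ i ∈ range k, (((n:ℝ) - ⌊z * n⌋₊ - i) / ((n:ℝ) - 1 - i)) with hg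
    have hgt : Tendsto g atTop (nhds ((1 + k : ℝ) * (1 - z) ^ k)) := by
      have : (1 - z) ^ k = ∏ _i ∈ range k, (1 - z) := by simp
      rw [this]
      refine Tendsto.mul tendsto_const_nhds ?_
      refine tendsto_finset_prod _ fun i _ => ?_
      have hnum : Tendsto (fun n : ℕ => 1 - (⌊z * n⌋₊ : ℝ)/n - i * (1/n)) atTop (nhds (1 - z)) := by
        have := ((tendsto_const_nhds (x := (1:ℝ))).sub (floor_div_tendsto z hz0)).sub
          ((tendsto_one_div_atTop_nhds_zero_nat).const_mul (i:ℝ))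
        simpa using this
      have hden : Tendsto (fun n : ℕ => 1 - 1/(n:ℝ) - i * (1/n)) atTop (nhds 1) := by
        have := ((tendsto_const_nhds (x := (1:ℝ))).sub tendsto_one_div_atTop_nhds_zero_nat).sub
          ((tendsto_one_div_atTop_nhds_zero_nat).const_mul (i:ℝ))
        simpa using this
      have := hnum.div hden (by norm_num)
      rw [div_one] at this
      refine Tendsto.congr' ?_ this
      filter_upwards [eventually_ge_atTop 1] with n hn
      have hnpos : (0:ℝ) < n := by exact_mod_cast hn
      have hne : (n:ℝ) ≠ 0 := ne_of_gt hnpos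
      rw [Pi.div_apply]
      field_simp
    refine Tendsto.congr' ?_ hgt
    have hev : ∀ᶠ n : ℕ in atTop, (k + 1 : ℝ) ≤ (n:ℝ) * (1 - z) := by
      have : Tendsto (fun n : ℕ => (n:ℝ) * (1 - z)) atTop atTop :=
        Tendsto.atTop_mul_const h1z tendsto_natCast_atTop_atTop
      exact this.eventually_ge_atTop _
    filter_upwards [hev, eventually_ge_atTop 1] with n hn hn1
    have hnpos : (0:ℝ) < n := by exact_mod_cast hn1
    have hfl : (⌊z * n⌋₊ : ℝ) ≤ z * n := Nat.floor_le (by positivity)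
    have hkm : (⌊z * n⌋₊ : ℝ) + (k + 1) ≤ n := by nlinarith
    have hkmN : ⌊z * n⌋₊ + (k + 1) ≤ n := by exact_mod_cast hkm
    set m := n - ⌊z * n⌋₊ with hm
    have hmk : k + 1 ≤ m := le_tsub_of_add_le_left (by omega)
    have hnk : k + 1 ≤ n := le_trans (by omega) hkmN
    have hmcast : (m : ℝ) = (n:ℝ) - ⌊z * n⌋₊ := by
      rw [hm, Nat.cast_sub (by omega)]
    -- express chooses via descFactorial
    have hcm : (Nat.choose m k : ℝ) = (∏ i ∈ range k, ((m:ℝ) - i)) / (k ! : ℝ) := by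
      rw [← cast_descFactorial_prod (by omega), Nat.descFactorial_eq_factorial_mul_choose]
      field_simp
      push_cast; ring
    have hn1' : n - 1 + 1 = n := by omega
    have hcn : (Nat.choose n (k+1) : ℝ)
        = (n:ℝ) * (∏ i ∈ range k, ((n:ℝ) - 1 - i)) / ((k+1)! : ℝ) := by
      have hd : Nat.descFactorial n (k+1) = n * Nat.descFactorial (n-1) k := by
        conv_lhs => rw [← hn1']
        rw [Nat.succ_descFactorial_succ, hn1']
      have := Nat.descFactorial_eq_factorial_mul_choose n (k+1)
      have hcast : ((k+1)! : ℝ) * (Nat.choose n (k+1) : ℝ)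
          = (n:ℝ) * (Nat.descFactorial (n-1) k : ℝ) := by
        have hN : (k+1)! * Nat.choose n (k+1) = n * Nat.descFactorial (n-1) k := by
          rw [← this, hd]
        exact_mod_cast congrArg (Nat.cast : ℕ → ℝ) hN
      have hprod : (Nat.descFactorial (n-1) k : ℝ) = ∏ i ∈ range k, ((n:ℝ) - 1 - i) := by
        rw [cast_descFactorial_prod (by omega)]
        refine Finset.prod_congr rfl fun i hi => ?_
        rw [Nat.cast_sub (by omega)]
        push_cast
        try ring
      rw [eq_div_iff (by positivity), mul_comm, hcast, hprod]
    -- denominators nonzero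
    have hDne : ∀ i ∈ range k, ((n:ℝ) - 1 - i) ≠ 0 := by
      intro i hi
      have hik : i < k := mem_range.mp hi
      have : (i:ℝ) + 1 + 1 ≤ n := by exact_mod_cast (by omega : i + 1 + 1 ≤ n)
      linarith
    have hDprod : (∏ i ∈ range k, ((n:ℝ) - 1 - i)) ≠ 0 :=
      Finset.prod_ne_zero_iff.mpr hDne
    rw [hcm, hcn]
    simp only [hg]
    rw [Finset.prod_div_distrib]
    simp only [hmcast]
    have hkfac : ((k+1)! : ℝ) = (k+1) * (k ! : ℝ) := by
      rw [Nat.factorial_succ]; push_cast; ring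
    rw [hkfac]
    field_simp
    ring
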